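/- Let m ≥ 1 and k ≥ 1 be natural numbers, let ζ ∈ ℂ be a primitive m-th root of unity, let x ∈ ℂ⟦τ⟧ be a formal power series whose coefficients of τ^j vanish for all j < k and whose coefficient a of τ^k is nonzero, and let u ∈ ℂ⟦τ⟧ be a power series whose constant coefficient u₀ satisfies u₀^m = 1. Let φ ∈ ℂ⟦τ⟧ be the product over ν = 0, …, m−1 of the substitutions x(ζ^ν · τ · u(τ)). Then the coefficient of τ^j in φ vanishes for every j < m·k, and the coefficient of τ^{m·k} in φ equals (−1)^{k(m−1)} · a^m. (This is the key computation in the proof of Theorem 5.1 'Endspurt': the composed map defining the monstrance has multiplicity m·k and its leading term is independent of the choice of projection.) -/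

import Mathlib

/-- Substitution of the power series `s` (assumed to have vanishing constant
coefficient) into the power series `x`: the coefficient of `τ^n` in `x(s)` is
`∑_{j ≤ n} (coeff j x) · (coeff n (s^j))`.  When the constant coefficient of `s`
vanishes, `coeff n (s^j) = 0` for `j > n`, so this is the usual substitution
(`PowerSeries.subst`). -/
noncomputable def substPS (s x : PowerSeries ℂ) : PowerSeries ℂ :=
  PowerSeries.mk fun n =>
    ∑ j ∈ Finset.range (n + 1), (PowerSeries.coeff j x) * (PowerSeries.coeff n (s ^ j))

open PowerSeries in
lemma substPS_facts (k : ℕ) (c : ℂ) (x u : PowerSeries ℂ)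
    (hx : ∀ j < k, PowerSeries.coeff j x = 0) :
    (∀ j < k, PowerSeries.coeff j (substPS (C c * X * u) x) = 0) ∧
      PowerSeries.coeff k (substPS (C c * X * u) x)
        = PowerSeries.coeff k x * (c * PowerSeries.constantCoeff u) ^ k := by
  have hs : (C c * X * u : PowerSeries ℂ) = X * (C c * u) := by ring
  have hpow : ∀ i j : ℕ, PowerSeries.coeff j ((C c * X * u) ^ i)
      = if i ≤ j then PowerSeries.coeff (j - i) ((C c * u) ^ i) else 0 := by
    intro i j
    rw [hs, mul_pow, coeff_X_pow_mul']
  constructor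
  · intro j hj
    simp only [substPS, coeff_mk]
    apply Finset.sum_eq_zero
    intro i hi
    rw [Finset.mem_range] at hi
    rw [hx i (by omega), zero_mul]
  · simp only [substPS, coeff_mk]
    rw [Finset.sum_eq_single k]
    · rw [hpow, if_pos le_rfl, Nat.sub_self, PowerSeries.coeff_zero_eq_constantCoeff,
        map_pow, map_mul, PowerSeries.constantCoeff_C]
    · intro i hi hik
      rw [Finset.mem_range] at hi
      rw [hx i (by omega), zero_mul]
    · intro h
      exact absurd (Finset.self_mem_range_succ k) h

open PowerSeries in
lemma shift_lemma (k : ℕ) (f : PowerSeries ℂ) (h : ∀ j < k, PowerSeries.coeff j f = 0) :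
    f = X ^ k * PowerSeries.mk (fun n => PowerSeries.coeff (n + k) f) := by
  ext n
  rw [coeff_X_pow_mul']
  split_ifs with hn
  · have h' : n - k + k = n := by omega
    rw [coeff_mk, h']
  · exact h n (by omega)

open PowerSeries in
lemma root_sum_pow (m : ℕ) (hm : 1 ≤ m) (ζ : ℂ) (hζ : IsPrimitiveRoot ζ m) :
    ζ ^ (∑ ν ∈ Finset.range m, ν) = (-1) ^ (m - 1) := by
  rcases Nat.even_or_odd m with he | ho
  · obtain ⟨t, rfl⟩ := he
    have ht : 1 ≤ t := by omega
    obtain ⟨t', rfl⟩ : ∃ t', t = t' + 1 := ⟨t - 1, by omega⟩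
    set t := t' + 1
    have hsum : ∑ ν ∈ Finset.range (t + t), ν = t * (t + t - 1) := by
      refine Nat.eq_of_mul_eq_mul_right two_pos ?_
      rw [Finset.sum_range_id_mul_two]
      show (t + t) * (t + t - 1) = t * (t + t - 1) * 2
      have h1 : t + t - 1 = 2 * t' + 1 := by omega
      rw [h1]; ring
    have h2 : (ζ ^ t) * (ζ ^ t) = 1 := by
      rw [← pow_add]; exact hζ.pow_eq_one
    have hne : ζ ^ t ≠ 1 := hζ.pow_ne_one_of_pos_of_lt (by omega) (by omega)
    have hneg : ζ ^ t = -1 := by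
      rcases mul_self_eq_one_iff.mp h2 with h | h
      · exact absurd h hne
      · exact h
    rw [hsum, pow_mul, hneg]
  · obtain ⟨t, rfl⟩ := ho
    have hsum : ∑ ν ∈ Finset.range (2 * t + 1), ν = (2 * t + 1) * t := by
      refine Nat.eq_of_mul_eq_mul_right two_pos ?_
      rw [Finset.sum_range_id_mul_two]
      have h1 : 2 * t + 1 - 1 = 2 * t := by omega
      rw [h1]; ring
    rw [hsum, pow_mul, hζ.pow_eq_one, one_pow]
    have : 2 * t + 1 - 1 = 2 * t := by omega
    rw [this, pow_mul]
    norm_num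

/-- The key computation in the proof of Theorem 5.1 ("Endspurt"): the product
`φ(τ) = ∏_{ν=0}^{m-1} x(ζ^ν · τ · u(τ))` has multiplicity `m·k` and its leading
coefficient is `(-1)^{k(m-1)} a^m`, where `a` is the leading coefficient of `x`. -/
theorem stmt1 (m k : ℕ) (hm : 1 ≤ m) (hk : 1 ≤ k)
    (ζ : ℂ) (hζ : IsPrimitiveRoot ζ m)
    (x u : PowerSeries ℂ)
    (hx : ∀ j < k, PowerSeries.coeff j x = 0)
    (a : ℂ) (ha : a = PowerSeries.coeff k x) (ha0 : a ≠ 0)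
    (hu : (PowerSeries.constantCoeff u) ^ m = 1)
    (φ : PowerSeries ℂ)
    (hφ : φ = ∏ ν ∈ Finset.range m,
      substPS (PowerSeries.C (ζ ^ ν) * PowerSeries.X * u) x) :
    (∀ j < m * k, PowerSeries.coeff j φ = 0) ∧
      PowerSeries.coeff (m * k) φ = (-1) ^ (k * (m - 1)) * a ^ m := by
  classical
  set u0 : ℂ := PowerSeries.constantCoeff u with hu0
  set f : ℕ → PowerSeries ℂ :=
    fun ν => substPS (PowerSeries.C (ζ ^ ν) * PowerSeries.X * u) x with hf
  have hfac : ∀ ν : ℕ, (∀ j < k, PowerSeries.coeff j (f ν) = 0) ∧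
      PowerSeries.coeff k (f ν) = PowerSeries.coeff k x * (ζ ^ ν * u0) ^ k :=
    fun ν => substPS_facts k (ζ ^ ν) x u hx
  set g : ℕ → PowerSeries ℂ :=
    fun ν => PowerSeries.mk (fun n => PowerSeries.coeff (n + k) (f ν)) with hg
  have hfg : ∀ ν, f ν = PowerSeries.X ^ k * g ν :=
    fun ν => shift_lemma k (f ν) ((hfac ν).1)
  have hconst : ∀ ν, PowerSeries.constantCoeff (g ν)
      = PowerSeries.coeff k x * (ζ ^ ν * u0) ^ k := by
    intro ν
    rw [← PowerSeries.coeff_zero_eq_constantCoeff_apply, hg]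
    simp only [PowerSeries.coeff_mk, Nat.zero_add]
    exact (hfac ν).2
  have hφ' : φ = PowerSeries.X ^ (k * m) * ∏ ν ∈ Finset.range m, g ν := by
    rw [hφ]
    calc (∏ ν ∈ Finset.range m,
          substPS (PowerSeries.C (ζ ^ ν) * PowerSeries.X * u) x)
        = ∏ ν ∈ Finset.range m, (PowerSeries.X ^ k * g ν) := by
          refine Finset.prod_congr rfl fun ν _ => ?_
          exact hfg ν
      _ = (∏ ν ∈ Finset.range m, (PowerSeries.X : PowerSeries ℂ) ^ k)
            * ∏ ν ∈ Finset.range m, g ν := Finset.prod_mul_distrib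
      _ = PowerSeries.X ^ (k * m) * ∏ ν ∈ Finset.range m, g ν := by
          rw [Finset.prod_const, Finset.card_range, ← pow_mul]
  constructor
  · intro j hj
    rw [hφ', PowerSeries.coeff_X_pow_mul', if_neg (by rw [Nat.mul_comm]; omega)]
  · rw [hφ', PowerSeries.coeff_X_pow_mul', if_pos (by rw [Nat.mul_comm]),
      Nat.mul_comm m k, Nat.sub_self, PowerSeries.coeff_zero_eq_constantCoeff_apply,
      map_prod]
    have : ∀ ν ∈ Finset.range m, PowerSeries.constantCoeff (g ν)
        = (a * u0 ^ k) * ((ζ ^ k) ^ ν) := by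
      intro ν _
      rw [hconst ν, ← ha, mul_pow, ← pow_mul, ← pow_mul, Nat.mul_comm ν k]
      ring
    rw [Finset.prod_congr rfl this, Finset.prod_mul_distrib, Finset.prod_const,
      Finset.card_range, Finset.prod_pow_eq_pow_sum]
    have hz : (ζ ^ k) ^ (∑ ν ∈ Finset.range m, ν) = (-1 : ℂ) ^ (k * (m - 1)) := by
      rw [← pow_mul, Nat.mul_comm, pow_mul, root_sum_pow m hm ζ hζ, ← pow_mul,
        Nat.mul_comm (m - 1) k]
    have hu1 : (a * u0 ^ k) ^ m = a ^ m := by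
      rw [mul_pow, ← pow_mul, Nat.mul_comm k m, pow_mul, hu, one_pow, mul_one]
    rw [hz, hu1, mul_comm]
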